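/- Let (a_n)_{n≥1} be a sequence of real numbers such that the power series g(t) = ∑_{n≥1} a_n t^n has radius of convergence ρ > 0, and suppose there exists ε ∈ (0, min(ρ,1)) such that g(t) = t·log(t)·g′(t) for all t ∈ (0, ε). Then a_n = 0 for all n ≥ 1, i.e., g is identically zero. -/

import Mathlib

open Filter Set FormalMultilinearSeries

/-- if `g(t) = ∑_{n≥1} a_n t^n` converges absolutely for `|t| < ρ` and
`g(t) = t·log(t)·g′(t)` on some interval `(0,ε)` with `0 < ε < min ρ 1`, then all `a_n`
vanish (the kernel of `ℒ` is trivial). -/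
theorem stmt_9 (ρ : ℝ) (hρ : 0 < ρ) (a : ℕ → ℝ)
    (hconv : ∀ t : ℝ, |t| < ρ → Summable (fun n : ℕ => |a (n + 1) * t ^ (n + 1)|))
    (ε : ℝ) (hε0 : 0 < ε) (hε : ε < min ρ 1)
    (hker : ∀ t ∈ Set.Ioo (0 : ℝ) ε,
      (∑' n : ℕ, a (n + 1) * t ^ (n + 1))
        = t * Real.log t * deriv (fun u : ℝ => ∑' n : ℕ, a (n + 1) * u ^ (n + 1)) t) :
    ∀ n : ℕ, a (n + 1) = 0 := by
  set g : ℝ → ℝ := fun u : ℝ => ∑' n : ℕ, a (n + 1) * u ^ (n + 1) with hgdef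
  set b : ℕ → ℝ := fun n => if n = 0 then 0 else a n with hbdef
  have hb0 : b 0 = 0 := rfl
  have hbs : ∀ n : ℕ, b (n + 1) = a (n + 1) := fun n => rfl
  -- choose an intermediate radius
  set r : ℝ := (ε + min ρ 1) / 2 with hrdef
  have hεr : ε < r := by rw [hrdef]; linarith
  have hrmin : r < min ρ 1 := by rw [hrdef]; linarith
  have hr0 : 0 < r := lt_trans hε0 hεr
  have hrρ : r < ρ := lt_of_lt_of_le hrmin (min_le_left _ _)
  have hr1 : r < 1 := lt_of_lt_of_le hrmin (min_le_right _ _)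
  have hε1 : ε < 1 := lt_of_lt_of_le hε (min_le_right _ _)
  set rn : NNReal := ⟨r, le_of_lt hr0⟩ with hrn
  set p : FormalMultilinearSeries ℝ ℝ ℝ := FormalMultilinearSeries.ofScalars ℝ b with hpdef
  -- the power series represents g on the ball of radius r
  have hball : HasFPowerSeriesOnBall g p 0 rn := by
    refine ⟨?_, by exact_mod_cast hr0, ?_⟩
    · apply p.le_radius_of_summable_norm
      have h1 : Summable (fun n : ℕ => |b n| * r ^ n) := by
        rw [← summable_nat_add_iff 1]
        have := hconv r (by rw [abs_of_pos hr0]; exact hrρ)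
        apply this.congr
        intro n
        rw [hbs, abs_mul, abs_of_pos (pow_pos hr0 _)]
      apply h1.congr
      intro n
      rw [hpdef, FormalMultilinearSeries.ofScalars_norm]
      rfl
    · intro y hy
      have hyr : |y| < r := by
        have := EMetric.mem_ball.mp hy
        rw [edist_zero_right] at this
        have h2 : ‖y‖₊ < rn := by exact_mod_cast this
        exact h2
      have hyρ : |y| < ρ := lt_trans hyr hrρ
      have hsum : Summable (fun n : ℕ => a (n + 1) * y ^ (n + 1)) :=
        (hconv y hyρ).of_abs
      have hS : HasSum (fun n : ℕ => a (n + 1) * y ^ (n + 1)) (g y) := hsum.hasSum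
      have hfun : ∀ n : ℕ, (p n fun _ => y) = b n * y ^ n := by
        intro n
        rw [hpdef, FormalMultilinearSeries.ofScalars_apply_eq, smul_eq_mul]
      have h3 : HasSum (fun n : ℕ => b n * y ^ n) (g (0 + y)) := by
        rw [zero_add]
        have := (hasSum_nat_add_iff (f := fun n : ℕ => b n * y ^ n) 1).mp
          (by simpa [hbs] using hS)
        simpa [hb0] using this
      simp only [hfun]
      exact h3
  have hanal : AnalyticOnNhd ℝ g (Metric.eball (0 : ℝ) rn) := hball.analyticOnNhd
  have hballs : Metric.eball (0 : ℝ) rn = Metric.ball (0 : ℝ) r := by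
    rw [Metric.emetric_ball_nnreal]
    rfl
  have hmem : ∀ t ∈ Set.Ioo (0 : ℝ) ε, t ∈ Metric.eball (0 : ℝ) rn := by
    intro t ht
    rw [hballs, Metric.mem_ball, Real.dist_eq, sub_zero]
    rw [abs_of_pos ht.1]
    exact lt_trans ht.2 hεr
  -- the quotient g t / log t has zero derivative on (0, ε)
  have hlogne : ∀ t ∈ Set.Ioo (0 : ℝ) ε, Real.log t ≠ 0 := by
    intro t ht
    exact ne_of_lt (Real.log_neg ht.1 (lt_trans ht.2 hε1))
  have hder : ∀ t ∈ Set.Ioo (0 : ℝ) ε,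
      HasDerivAt (fun u => g u / Real.log u) 0 t := by
    intro t ht
    have hgd : DifferentiableAt ℝ g t := (hanal t (hmem t ht)).differentiableAt
    have hgda : HasDerivAt g (deriv g t) t := hgd.hasDerivAt
    have hld : HasDerivAt Real.log t⁻¹ t := Real.hasDerivAt_log (ne_of_gt ht.1)
    have hdiv := hgda.div hld (hlogne t ht)
    have hkey : g t = t * Real.log t * deriv g t := hker t ht
    have hnum : deriv g t * Real.log t - g t * t⁻¹ = 0 := by
      rw [hkey]; field_simp [ne_of_gt ht.1]; ring
    have h := hdiv
    simp only [hnum, zero_div] at h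
    exact h
  -- hence it is constant on (0, ε)
  have hconst : ∀ t ∈ Set.Ioo (0 : ℝ) ε,
      g t / Real.log t = g (ε / 2) / Real.log (ε / 2) := by
    have hhalf : ε / 2 ∈ Set.Ioo (0 : ℝ) ε := ⟨by linarith, by linarith⟩
    intro t ht
    apply (convex_Ioo (0 : ℝ) ε).is_const_of_fderivWithin_eq_zero
      (𝕜 := ℝ) (f := fun u => g u / Real.log u)
    · intro x hx
      exact ((hder x hx).differentiableAt).differentiableWithinAt
    · intro x hx
      rw [fderivWithin_of_isOpen isOpen_Ioo hx]
      have := ((hder x hx).hasFDerivAt).fderiv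
      rw [this]
      ext y
      simp
    · exact ht
    · exact hhalf
  set c : ℝ := g (ε / 2) / Real.log (ε / 2) with hcdef
  have hglog : ∀ t ∈ Set.Ioo (0 : ℝ) ε, g t = c * Real.log t := by
    intro t ht
    have := hconst t ht
    field_simp [hlogne t ht] at this
    rw [this, mul_comm]
  -- g tends to 0 at 0⁺
  have hg00 : g 0 = 0 := by
    rw [hgdef]
    simp
  have hgc : Tendsto g (nhdsWithin 0 (Set.Ioi 0)) (nhds 0) := by
    have h1 : ContinuousAt g 0 := hball.analyticAt.continuousAt
    have h2 : Tendsto g (nhds 0) (nhds (g 0)) := h1.tendsto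
    rw [hg00] at h2
    exact h2.mono_left nhdsWithin_le_nhds
  -- conclude c = 0
  have hc0 : c = 0 := by
    by_contra hc
    have hev : ∀ᶠ t in nhdsWithin (0 : ℝ) (Set.Ioi 0), g t = c * Real.log t := by
      filter_upwards [Ioo_mem_nhdsGT_of_mem (Set.mem_Ico.mpr ⟨le_refl 0, hε0⟩)]
        with t ht using hglog t ht
    have hT : Tendsto (fun t => c * Real.log t) (nhdsWithin 0 (Set.Ioi 0)) (nhds 0) :=
      hgc.congr' hev
    rcases lt_or_gt_of_ne hc with hneg | hpos
    · have := (tendsto_const_mul_atTop_of_neg hneg).mpr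
        Real.tendsto_log_nhdsGT_zero
      exact not_tendsto_nhds_of_tendsto_atTop this 0 hT
    · have := (tendsto_const_mul_atBot_of_pos hpos).mpr
        Real.tendsto_log_nhdsGT_zero
      exact not_tendsto_nhds_of_tendsto_atBot this 0 hT
  have hgzero : ∀ t ∈ Set.Ioo (0 : ℝ) ε, g t = 0 := by
    intro t ht
    rw [hglog t ht, hc0, zero_mul]
  -- identity theorem: g vanishes on the whole ball
  have hEq : Set.EqOn g 0 (Metric.eball (0 : ℝ) rn) := by
    apply hanal.eqOn_zero_of_preconnected_of_frequently_eq_zero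
    · rw [hballs]
      exact (convex_ball (0 : ℝ) r).isPreconnected
    · rw [hballs]
      exact Metric.mem_ball_self hr0
    · have h1 : ∀ᶠ z in nhdsWithin (0 : ℝ) (Set.Ioi 0), g z = 0 := by
        filter_upwards [Ioo_mem_nhdsGT_of_mem (Set.mem_Ico.mpr ⟨le_refl 0, hε0⟩)]
          with t ht using hgzero t ht
      exact h1.frequently.filter_mono
        (nhdsWithin_mono 0 (fun x hx => ne_of_gt hx))
  -- hence the power series is zero
  have hp0 : p = 0 := by
    apply hball.hasFPowerSeriesAt.eq_zero_of_eventually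
    filter_upwards [EMetric.ball_mem_nhds (0 : ℝ) hball.r_pos] with z hz
    exact hEq hz
  have hbz : b = 0 := by
    rwa [hpdef, FormalMultilinearSeries.ofScalars_series_eq_zero] at hp0
  intro n
  have := congrFun hbz (n + 1)
  rwa [hbs] at this
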